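/- Let 0 ≤ l ≤ e−1 and let C be a linear code of length n over R whose component codes satisfy 0 < dim_{F_q} C_i < n for each i = 1,2,3,4. Then C is an MDS code over R if and only if its l-Galois dual C^{⊥_l} is an MDS code over R. -/

import Mathlib

open scoped BigOperators

/-- The ring `R = F_q + uF_q + vF_q + uvF_q ≅ F_q^4` (componentwise operations). -/
abbrev RR (F : Type*) := Fin 4 → F

/-- The pairwise orthogonal idempotents `γ_1, γ_2, γ_3, γ_4` of `R`,
realized as the standard idempotents of `F_q^4`. -/
def gam (F : Type*) [Field F] (i : Fin 4) : RR F := Pi.single i 1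

/-- The `i`-th component code `C_i ⊆ F_q^n` of a code `C ⊆ R^n`. -/
def compCode {F : Type*} [Field F] {n : ℕ} (C : Set (Fin n → RR F)) (i : Fin 4) :
    Set (Fin n → F) :=
  {x | ∃ c ∈ C, ∀ j, c j i = x j}

/-- Euclidean dual of a code over `R`. -/
def euclDualR {F : Type*} [Field F] {n : ℕ} (C : Set (Fin n → RR F)) :
    Set (Fin n → RR F) :=
  {s | ∀ t ∈ C, ∑ j, t j * s j = 0}

/-- `l`-Galois dual of a code over `R`; apply with `pl = p ^ l`
(the `l`-Galois inner product is `[t,s]_l = ∑ j, t j * (s j) ^ (p ^ l)`,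
since `F^l(r) = r ^ (p ^ l)`). -/
def galDualR {F : Type*} [Field F] {n : ℕ} (pl : ℕ) (C : Set (Fin n → RR F)) :
    Set (Fin n → RR F) :=
  {s | ∀ t ∈ C, ∑ j, t j * s j ^ pl = 0}

/-- `l`-Galois dual of a code over the field `F = F_q`; apply with `pl = p ^ l`. -/
def galDualF {F : Type*} [Field F] {ι : Type*} [Fintype ι] (pl : ℕ) (D : Set (ι → F)) :
    Set (ι → F) :=
  {x | ∀ c ∈ D, ∑ j, c j * x j ^ pl = 0}

/-- Lee weight of a vector over `R`: the sum of the Hamming weights of the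
quadruples of `γ`-components of the coordinates. -/
def leeWt {F : Type*} [Field F] [DecidableEq F] {n : ℕ} (c : Fin n → RR F) : ℕ :=
  ∑ j, hammingNorm (c j)

/-- Minimum Lee distance of a code over `R`. -/
noncomputable def dLee {F : Type*} [Field F] [DecidableEq F] {n : ℕ} (C : Set (Fin n → RR F)) : ℕ :=
  sInf (leeWt '' {c ∈ C | c ≠ 0})

/-- Minimum Hamming distance of a code over `F_q`. -/
noncomputable def dHam {F : Type*} [Field F] [DecidableEq F] {ι : Type*} [Fintype ι]
    (D : Set (ι → F)) : ℕ :=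
  sInf (hammingNorm '' {x ∈ D | x ≠ 0})

/-- The Gray map `ρ : R^n → F_q^{4n}`. -/
def gray {F : Type*} [Field F] {n : ℕ} (c : Fin n → RR F) : Fin n × Fin 4 → F :=
  fun ji => c ji.1 ji.2

/-- The code `C^α = {(α_1 c_1, …, α_n c_n) : c ∈ C}` over `R`. -/
def scaleCode {F : Type*} [Field F] {n : ℕ} (α : Fin n → RR F)
    (C : Set (Fin n → RR F)) : Set (Fin n → RR F) :=
  (fun c => fun j => α j * c j) '' C

/-- The code `C^a = {(a_1 c_1, …, a_n c_n) : c ∈ C}` over `F_q`. -/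
def scaleCodeF {F : Type*} [Field F] {n : ℕ} (a : Fin n → F)
    (D : Set (Fin n → F)) : Set (Fin n → F) :=
  (fun c => fun j => a j * c j) '' D

/-- `P_S`: the submatrix of `P` obtained by deleting the rows and columns
indexed by `S` (its determinant is `1` when `S` is everything, since the
empty matrix has determinant `1`). -/
def minorOff {F : Type*} [Field F] {m : ℕ} (P : Matrix (Fin m) (Fin m) F)
    (S : Finset (Fin m)) : Matrix {i : Fin m // i ∉ S} {i : Fin m // i ∉ S} F :=
  P.submatrix (fun a => (a : Fin m)) (fun a => (a : Fin m))


set_option linter.unusedSectionVars false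
set_option maxHeartbeats 1000000

namespace S19
variable {F : Type*} [Field F] [Fintype F] [DecidableEq F] {n : ℕ}
variable {F : Type*} [Field F] [Fintype F] [DecidableEq F] {n : ℕ}

noncomputable def dotB (F : Type*) [Field F] (n : ℕ) :
    LinearMap.BilinForm F (Fin n → F) :=
  LinearMap.mk₂ F (fun x y => ∑ j, x j * y j)
    (by intros; simp [add_mul, Finset.sum_add_distrib])
    (by intros; simp [Finset.mul_sum, Finset.sum_comm, mul_assoc])
    (by intros; simp [mul_add, Finset.sum_add_distrib])
    (by intros; simp [Finset.mul_sum]; apply Finset.sum_congr rfl; intros; ring)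

theorem dotB_apply (x y : Fin n → F) : dotB F n x y = ∑ j, x j * y j := rfl

theorem dotB_nondeg : (dotB F n).Nondegenerate := by
  constructor <;> intro x h <;> funext j <;> have := h (Pi.single j 1) <;>
  simpa [dotB_apply, Pi.single_apply, mul_ite, ite_mul, Finset.sum_ite_eq'] using this

theorem dotB_refl : (dotB F n).IsRefl := by
  intro x y h
  rw [dotB_apply] at h ⊢
  simpa [mul_comm] using h

noncomputable def dualSub (D : Submodule F (Fin n → F)) : Submodule F (Fin n → F) :=
  (dotB F n).orthogonal D

theorem mem_dualSub {D : Submodule F (Fin n → F)} {x : Fin n → F} :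
    x ∈ dualSub D ↔ ∀ c ∈ D, ∑ j, c j * x j = 0 := by
  simp [dualSub, LinearMap.BilinForm.mem_orthogonal_iff, LinearMap.BilinForm.isOrtho_def,
    dotB_apply]

theorem finrank_dualSub (D : Submodule F (Fin n → F)) :
    Module.finrank F (dualSub D) = n - Module.finrank F D := by
  have := LinearMap.BilinForm.finrank_orthogonal (B := dotB F n) dotB_nondeg D
  rwa [Module.finrank_pi, Fintype.card_fin] at this

theorem dualSub_dualSub (D : Submodule F (Fin n → F)) : dualSub (dualSub D) = D :=
  LinearMap.BilinForm.orthogonal_orthogonal dotB_nondeg dotB_refl D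

theorem card_submodule (D : Submodule F (Fin n → F)) :
    Nat.card D = Fintype.card F ^ Module.finrank F D := by
  have : Fintype D := Fintype.ofFinite _
  rw [Nat.card_eq_fintype_card]
  exact Module.card_eq_pow_finrank

variable {F : Type*} [Field F] [Fintype F] [DecidableEq F] {n : ℕ}

theorem exists_low_weight (D : Submodule F (Fin n → F)) {k : ℕ} (h1 : 0 < k) (h2 : k ≤ n)
    (hcard : Fintype.card F ^ k ≤ Nat.card D) :
    ∃ x ∈ D, x ≠ 0 ∧ hammingNorm x + k ≤ n + 1 := by
  have hkn : k - 1 ≤ n := le_trans (Nat.sub_le k 1) h2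
  have hlt : Nat.card (Fin (k - 1) → F) < Nat.card D := by
    refine lt_of_lt_of_le ?_ hcard
    rw [Nat.card_eq_fintype_card, Fintype.card_fun, Fintype.card_fin]
    exact Nat.pow_lt_pow_right Fintype.one_lt_card (by omega)
  haveI : Fintype D := Fintype.ofFinite _
  rw [Nat.card_eq_fintype_card, Nat.card_eq_fintype_card] at hlt
  obtain ⟨c1, c2, hne, heq⟩ := Fintype.exists_ne_map_eq_of_card_lt
    (fun c : D => fun j : Fin (k - 1) => (c : Fin n → F) (Fin.castLE hkn j)) hlt
  refine ⟨(c1 : Fin n → F) - (c2 : Fin n → F), sub_mem c1.2 c2.2, ?_, ?_⟩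
  · intro h
    exact hne (Subtype.ext (by rwa [sub_eq_zero] at h))
  · set x : Fin n → F := (c1 : Fin n → F) - (c2 : Fin n → F) with hx
    have hz : ∀ j : Fin (k - 1), x (Fin.castLE hkn j) = 0 := by
      intro j
      have := congrFun heq j
      simp only [hx, Pi.sub_apply, sub_eq_zero]
      exact this
    have hsub : (Finset.univ : Finset (Fin (k-1))).image (Fin.castLE hkn) ⊆
        Finset.univ.filter (fun j => x j = 0) := by
      intro j hj
      simp only [Finset.mem_image] at hj
      obtain ⟨a, _, rfl⟩ := hj
      simp [hz a]
    have hcard1 : k - 1 ≤ (Finset.univ.filter (fun j => x j = 0)).card := by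
      have := Finset.card_le_card hsub
      rwa [Finset.card_image_of_injective _ (Fin.castLE_injective hkn), Finset.card_univ,
        Fintype.card_fin] at this
    have hsplit := Finset.card_filter_add_card_filter_not
      (s := (Finset.univ : Finset (Fin n))) (p := fun j => x j = 0)
    simp only [Finset.card_univ, Fintype.card_fin] at hsplit
    have : hammingNorm x = (Finset.univ.filter (fun j => ¬ x j = 0)).card := by
      unfold hammingNorm
      congr 1
    omega

theorem dual_dist (D : Submodule F (Fin n → F)) {k : ℕ}
    (hkn : k ≤ n)
    (hcard : Nat.card D = Fintype.card F ^ k)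
    (hd : ∀ c ∈ D, c ≠ 0 → n + 1 - k ≤ hammingNorm c)
    {x : Fin n → F} (hx : ∀ c ∈ D, ∑ j, c j * x j = 0) (hx0 : x ≠ 0) :
    k + 1 ≤ hammingNorm x := by
  by_contra hlt
  push_neg at hlt
  have hwk : (Finset.univ.filter (fun j => x j ≠ 0)).card ≤ k := by
    have : hammingNorm x ≤ k := by omega
    exact this
  obtain ⟨S', hSsub, hScard⟩ := Finset.exists_superset_card_eq hwk (by simpa using hkn)
  haveI : Fintype D := Fintype.ofFinite _
  -- restriction map
  set r : D → ({j // j ∈ S'} → F) := fun c => fun j => (c : Fin n → F) j.1 with hr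
  have hinj : Function.Injective r := by
    intro c1 c2 h
    have hz : ∀ j ∈ S', ((c1 : Fin n → F) - (c2 : Fin n → F)) j = 0 := by
      intro j hj
      have := congrFun h ⟨j, hj⟩
      simp only [hr, Pi.sub_apply, sub_eq_zero]
      exact this
    by_contra hne
    have hx0' : ((c1 : Fin n → F) - (c2 : Fin n → F)) ≠ 0 := by
      intro h0
      exact hne (Subtype.ext (by rwa [sub_eq_zero] at h0))
    have hlow := hd _ (sub_mem c1.2 c2.2) hx0'
    have hhigh : hammingNorm ((c1 : Fin n → F) - (c2 : Fin n → F)) ≤ n - k := by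
      have hsub : Finset.univ.filter (fun j => ((c1 : Fin n → F) - (c2 : Fin n → F)) j ≠ 0) ⊆ S'ᶜ := by
        intro j hj
        simp only [Finset.mem_filter] at hj
        simp only [Finset.mem_compl]
        intro hjS
        exact hj.2 (hz j hjS)
      have := Finset.card_le_card hsub
      rwa [Finset.card_compl, Fintype.card_fin, hScard] at this
    omega
  have hbij : Function.Bijective r := by
    rw [Fintype.bijective_iff_injective_and_card]
    refine ⟨hinj, ?_⟩
    rw [Fintype.card_fun, ← Nat.card_eq_fintype_card, hcard, Fintype.card_coe, hScard]
  obtain ⟨j0, hj0⟩ : ∃ j0, x j0 ≠ 0 := Function.ne_iff.mp hx0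
  have hj0S : j0 ∈ S' := hSsub (by simp [hj0])
  obtain ⟨c, hc⟩ := hbij.2 (fun j => if (j : Fin n) = j0 then (x j0)⁻¹ else 0)
  have h0 := hx c c.2
  have hsum : ∑ j, (c : Fin n → F) j * x j = 1 := by
    rw [← Finset.sum_subset (Finset.subset_univ S')]
    · have : ∀ j ∈ S', (c : Fin n → F) j * x j
          = if j = j0 then (x j0)⁻¹ * x j else 0 := by
        intro j hj
        have := congrFun hc ⟨j, hj⟩
        simp only [hr] at this
        rw [this]
        split <;> simp
      rw [Finset.sum_congr rfl this, Finset.sum_ite_eq' S' j0, if_pos hj0S,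
        inv_mul_cancel₀ hj0]
    · intro j _ hjS
      have hxj : x j = 0 := by
        by_contra hxj
        exact hjS (hSsub (by simp [hxj]))
      rw [hxj, mul_zero]
  rw [h0] at hsum
  exact zero_ne_one hsum

variable {F : Type*} [Field F] [Fintype F] [DecidableEq F] {n : ℕ}

theorem dHam_le {D : Set (Fin n → F)} {x : Fin n → F} (hx : x ∈ D) (hx0 : x ≠ 0) :
    dHam D ≤ hammingNorm x :=
  Nat.sInf_le ⟨x, ⟨hx, hx0⟩, rfl⟩

theorem dHam_mem {D : Set (Fin n → F)} (hne : ∃ x ∈ D, x ≠ 0) :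
    ∃ x ∈ D, x ≠ 0 ∧ hammingNorm x = dHam D := by
  obtain ⟨x, hx, hx0⟩ := hne
  have : (hammingNorm '' {x ∈ D | x ≠ 0}).Nonempty := ⟨_, ⟨x, ⟨hx, hx0⟩, rfl⟩⟩
  obtain ⟨y, ⟨hy, hy0⟩, hyn⟩ := Nat.sInf_mem this
  exact ⟨y, hy, hy0, hyn⟩

variable {F : Type*} [Field F] [Fintype F] [DecidableEq F] {n : ℕ}

theorem mds_dual_forward (dualSub : Submodule F (Fin n → F) → Submodule F (Fin n → F))
    (hmem : ∀ D x, x ∈ dualSub D ↔ ∀ c ∈ D, ∑ j, c j * x j = 0)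
    (hfr : ∀ D : Submodule F (Fin n → F),
      Module.finrank F (dualSub D) = n - Module.finrank F D)
    (hcs : ∀ D : Submodule F (Fin n → F),
      Nat.card D = Fintype.card F ^ Module.finrank F D)
    (D : Submodule F (Fin n → F)) {k : ℕ}
    (hcard : Nat.card D = Fintype.card F ^ k) (h1 : 0 < k) (h2 : k < n)
    (hmds : dHam (D : Set (Fin n → F)) + k = n + 1) :
    dHam ((dualSub D : Submodule F (Fin n → F)) : Set (Fin n → F)) + (n - k) = n + 1 := by
  have hq : 1 < Fintype.card F := Fintype.one_lt_card
  have hfk : Module.finrank F D = k := by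
    have := (hcs D).symm.trans hcard
    exact Nat.pow_right_injective hq this
  have hcd : Nat.card (dualSub D) = Fintype.card F ^ (n - k) := by
    rw [hcs (dualSub D), hfr D, hfk]
  -- dual has a low-weight nonzero element
  obtain ⟨x0, hx0m, hx00, hx0w⟩ := exists_low_weight (dualSub D)
    (k := n - k) (by omega) (by omega) (le_of_eq hcd.symm)
  have hub : dHam ((dualSub D : Submodule F (Fin n → F)) : Set (Fin n → F)) + (n-k) ≤ n + 1 :=
    le_trans (Nat.add_le_add_right (dHam_le hx0m hx00) _) hx0w
  -- lower bound
  obtain ⟨x1, hx1m, hx10, hx1n⟩ := dHam_mem (D := ((dualSub D : Submodule F (Fin n → F)) :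
    Set (Fin n → F))) ⟨x0, hx0m, hx00⟩
  have hlb : k + 1 ≤ hammingNorm x1 := by
    refine dual_dist D (le_of_lt h2) hcard ?_ ((hmem D x1).mp hx1m) hx10
    intro c hc hc0
    have := dHam_le (D := (D : Set (Fin n → F))) hc hc0
    omega
  omega


theorem mds_dual_iff (dualSub : Submodule F (Fin n → F) → Submodule F (Fin n → F))
    (hmem : ∀ D x, x ∈ dualSub D ↔ ∀ c ∈ D, ∑ j, c j * x j = 0)
    (hfr : ∀ D : Submodule F (Fin n → F),
      Module.finrank F (dualSub D) = n - Module.finrank F D)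
    (hcs : ∀ D : Submodule F (Fin n → F),
      Nat.card D = Fintype.card F ^ Module.finrank F D)
    (hdd : ∀ D : Submodule F (Fin n → F), dualSub (dualSub D) = D)
    (D : Submodule F (Fin n → F)) {k : ℕ}
    (hcard : Nat.card D = Fintype.card F ^ k) (h1 : 0 < k) (h2 : k < n) :
    (dHam (D : Set (Fin n → F)) + k = n + 1) ↔
      (dHam ((dualSub D : Submodule F (Fin n → F)) : Set (Fin n → F)) + (n - k) = n + 1) := by
  have hq : 1 < Fintype.card F := Fintype.one_lt_card
  have hfk : Module.finrank F D = k := Nat.pow_right_injective hq ((hcs D).symm.trans hcard)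
  constructor
  · exact mds_dual_forward dualSub hmem hfr hcs D hcard h1 h2
  · intro h
    have hcd : Nat.card (dualSub D) = Fintype.card F ^ (n - k) := by
      rw [hcs (dualSub D), hfr D, hfk]
    have := mds_dual_forward dualSub hmem hfr hcs (dualSub D) hcd (by omega) (by omega) h
    rw [hdd D, Nat.sub_sub_self (le_of_lt h2)] at this
    exact this

variable {F : Type*} [Field F] [Fintype F] [DecidableEq F] {n : ℕ}

variable {pl : ℕ}
variable (hbij : Function.Bijective fun a : F => a ^ pl)

noncomputable def Phi (hbij : Function.Bijective fun a : F => a ^ pl) :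
    (Fin n → F) ≃ (Fin n → F) :=
  Equiv.piCongrRight fun _ => Equiv.ofBijective _ hbij

theorem Phi_apply (x : Fin n → F) (j : Fin n) : Phi hbij x j = x j ^ pl := rfl

theorem Phi_zero_iff (hpl : 0 < pl) (x : Fin n → F) : Phi hbij x = 0 ↔ x = 0 := by
  constructor
  · intro h
    funext j
    have := congrFun h j
    rw [Phi_apply] at this
    exact pow_eq_zero_iff hpl.ne' |>.mp this
  · rintro rfl
    funext j
    rw [Phi_apply]
    exact zero_pow hpl.ne'

theorem Phi_norm (hpl : 0 < pl) (x : Fin n → F) : hammingNorm (Phi hbij x) = hammingNorm x := by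
  unfold hammingNorm
  congr 1
  apply Finset.filter_congr
  intro j _
  rw [Phi_apply]
  exact not_congr (pow_eq_zero_iff hpl.ne')

theorem galDualF_eq_preimage (D : Set (Fin n → F)) (ED : Set (Fin n → F))
    (hED : ∀ x, x ∈ ED ↔ ∀ c ∈ D, ∑ j, c j * x j = 0) :
    galDualF pl D = (Phi hbij) ⁻¹' ED := by
  ext x
  simp only [galDualF, Set.mem_setOf_eq, Set.mem_preimage, hED]
  constructor <;> intro h c hc <;> simpa [Phi_apply] using h c hc

theorem card_preimage (ED : Set (Fin n → F)) :
    Nat.card ((Phi (n := n) hbij) ⁻¹' ED) = Nat.card ED := by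
  rw [← Equiv.image_symm_eq_preimage]
  exact Nat.card_image_of_injective (Phi hbij).symm.injective _

theorem dHam_preimage (hpl : 0 < pl) (ED : Set (Fin n → F)) :
    dHam ((Phi (n := n) hbij) ⁻¹' ED) = dHam ED := by
  unfold dHam
  congr 1
  ext m
  simp only [Set.mem_image, Set.mem_setOf_eq, Set.mem_preimage]
  constructor
  · rintro ⟨x, ⟨hx, hx0⟩, rfl⟩
    exact ⟨Phi hbij x, ⟨hx, fun h => hx0 ((Phi_zero_iff hbij hpl x).mp h)⟩,
      (Phi_norm hbij hpl x)⟩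
  · rintro ⟨y, ⟨hy, hy0⟩, rfl⟩
    refine ⟨(Phi hbij).symm y, ⟨?_, ?_⟩, ?_⟩
    · simpa using hy
    · intro h
      apply hy0
      have := congrArg (Phi hbij) h
      simp only [Equiv.apply_symm_apply] at this
      rw [this]
      funext j
      rw [Phi_apply]
      exact zero_pow hpl.ne'
    · rw [← Phi_norm hbij hpl ((Phi hbij).symm y), Equiv.apply_symm_apply]

variable {F : Type*} [Field F] [Fintype F] [DecidableEq F] {n : ℕ}

theorem mem_prod_iff (C : Submodule (RR F) (Fin n → RR F)) (c : Fin n → RR F) :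
    c ∈ C ↔ ∀ i, (fun j => c j i) ∈ compCode (C : Set (Fin n → RR F)) i := by
  constructor
  · intro hc i
    exact ⟨c, hc, fun j => rfl⟩
  · intro h
    choose t ht hteq using h
    have hc' : (∑ i, gam F i • t i) ∈ C :=
      Submodule.sum_mem C fun i _ => Submodule.smul_mem C _ (ht i)
    have : (∑ i, gam F i • t i) = c := by
      funext j i'
      rw [Finset.sum_apply, Finset.sum_apply]
      have : ∀ i, (gam F i • t i) j i' = (if i = i' then t i j i' else 0) := by
        intro i
        show gam F i i' * t i j i' = _
        rcases eq_or_ne i i' with rfl | hne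
        · simp [gam]
        · simp [gam, Pi.single_eq_of_ne hne.symm, hne]
      rw [Finset.sum_congr rfl fun i _ => this i, Finset.sum_ite_eq' Finset.univ i'
        (fun i => t i j i'), if_pos (Finset.mem_univ i')]
      exact hteq i' j
    rwa [this] at hc'

/-- `i`-component of a codeword as element of compCode. -/
theorem col_mem (C : Submodule (RR F) (Fin n → RR F)) {c : Fin n → RR F} (hc : c ∈ C)
    (i : Fin 4) : (fun j => c j i) ∈ compCode (C : Set (Fin n → RR F)) i :=
  ⟨c, hc, fun j => rfl⟩

/-- The component code as an F-submodule. -/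
def compSub (C : Submodule (RR F) (Fin n → RR F)) (i : Fin 4) : Submodule F (Fin n → F) where
  carrier := compCode (C : Set (Fin n → RR F)) i
  add_mem' := by
    rintro a b ⟨c, hc, hceq⟩ ⟨d, hd, hdeq⟩
    exact ⟨c + d, add_mem hc hd, fun j => by
      simp only [Pi.add_apply, hceq j, hdeq j]⟩
  zero_mem' := ⟨0, zero_mem C, fun j => rfl⟩
  smul_mem' := by
    rintro a x ⟨c, hc, hceq⟩
    refine ⟨(fun _ => a : RR F) • c, Submodule.smul_mem C _ hc, fun j => ?_⟩
    show (fun _ => a : RR F) i * c j i = a * x j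
    rw [hceq j]

theorem galDualR_mem_iff (C : Submodule (RR F) (Fin n → RR F)) (pl : ℕ) (s : Fin n → RR F) :
    s ∈ galDualR pl (C : Set (Fin n → RR F)) ↔
      ∀ i, (fun j => s j i) ∈ galDualF pl (compCode (C : Set (Fin n → RR F)) i) := by
  constructor
  · intro hs i x hx
    obtain ⟨t, ht, hteq⟩ := hx
    have h1 : (gam F i • t) ∈ C := Submodule.smul_mem C _ ht
    have h2 := hs _ h1
    have h3 := congrFun h2 i
    rw [Finset.sum_apply] at h3
    calc ∑ j, x j * s j i ^ pl
        = ∑ j, ((gam F i • t) j * s j ^ pl) i := by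
          apply Finset.sum_congr rfl
          intro j _
          have hr : ((gam F i • t) j * s j ^ pl) i = (gam F i i * t j i) * (s j i) ^ pl := rfl
          rw [hr, gam, Pi.single_eq_same, one_mul, hteq j]
      _ = 0 := by simpa using h3
  · intro h t ht
    funext i
    rw [Finset.sum_apply]
    show _ = (0 : F)
    have := h i _ (col_mem C ht i)
    calc ∑ j, (t j * s j ^ pl) i = ∑ j, t j i * s j i ^ pl := by
          apply Finset.sum_congr rfl
          intro j _
          simp [Pi.pow_apply]
      _ = 0 := this
    
theorem card_prod {S : Set (Fin n → RR F)} {T : Fin 4 → Set (Fin n → F)}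
    (h : ∀ s, s ∈ S ↔ ∀ i, (fun j => s j i) ∈ T i) :
    Nat.card S = ∏ i, Nat.card (T i) := by
  have e : S ≃ (∀ i, T i) :=
    { toFun := fun s => fun i => ⟨fun j => s.1 j i, (h s.1).mp s.2 i⟩
      invFun := fun x => ⟨fun j i => (x i).1 j, (h _).mpr fun i => by
        simpa using (x i).2⟩
      left_inv := fun s => rfl
      right_inv := fun x => rfl }
  rw [Nat.card_congr e, Nat.card_pi]

theorem leeWt_eq (c : Fin n → RR F) :
    leeWt c = ∑ i, hammingNorm (fun j => c j i) := by
  unfold leeWt hammingNorm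
  simp only [Finset.card_filter]
  rw [Finset.sum_comm]

theorem dLee_le {S : Set (Fin n → RR F)} {T : Fin 4 → Set (Fin n → F)}
    (h : ∀ s, s ∈ S ↔ ∀ i, (fun j => s j i) ∈ T i)
    (h0 : ∀ i, (0 : Fin n → F) ∈ T i)
    {i : Fin 4} {x : Fin n → F} (hx : x ∈ T i) (hx0 : x ≠ 0) :
    dLee S ≤ hammingNorm x := by
  set s : Fin n → RR F := fun j i' => if i' = i then x j else 0 with hs
  have hsS : s ∈ S := by
    rw [h]
    intro i'
    by_cases hi : i' = i
    · subst hi; simpa [hs] using hx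
    · simp [hs, hi]; exact h0 i'
  have hs0 : s ≠ 0 := by
    intro hz
    apply hx0
    funext j
    have := congrFun (congrFun hz j) i
    simpa [hs] using this
  have hw : leeWt s = hammingNorm x := by
    rw [leeWt_eq]
    have : ∀ i', hammingNorm (fun j => s j i') = if i' = i then hammingNorm x else 0 := by
      intro i'
      by_cases hi : i' = i
      · subst hi; simp [hs]
      · simp [hs, hi, hammingNorm]
    rw [Finset.sum_congr rfl fun i' _ => this i', Finset.sum_ite_eq' Finset.univ i
      (fun _ => hammingNorm x), if_pos (Finset.mem_univ i)]
  exact hw ▸ Nat.sInf_le ⟨s, ⟨hsS, hs0⟩, rfl⟩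

theorem exists_dLee_col {S : Set (Fin n → RR F)} {T : Fin 4 → Set (Fin n → F)}
    (h : ∀ s, s ∈ S ↔ ∀ i, (fun j => s j i) ∈ T i)
    (h0 : ∀ i, (0 : Fin n → F) ∈ T i)
    (hne : ∃ x ∈ T 0, x ≠ (0 : Fin n → F)) :
    ∃ i, ∃ x ∈ T i, x ≠ 0 ∧ hammingNorm x ≤ dLee S := by
  obtain ⟨x, hx, hx0⟩ := hne
  -- S has a nonzero element via component 0
  have hSne : (leeWt '' {c ∈ S | c ≠ 0}).Nonempty := by
    set s : Fin n → RR F := fun j i' => if i' = (0 : Fin 4) then x j else 0 with hs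
    have hsS : s ∈ S := by
      rw [h]; intro i'
      by_cases hi : i' = 0
      · subst hi; simpa [hs] using hx
      · simp [hs, hi]; exact h0 i'
    have hs0 : s ≠ 0 := by
      intro hz; apply hx0; funext j
      have := congrFun (congrFun hz j) 0
      simpa [hs] using this
    exact ⟨leeWt s, s, ⟨hsS, hs0⟩, rfl⟩
  have hmem := Nat.sInf_mem hSne
  obtain ⟨s0, ⟨hs0S, hs00⟩, hws⟩ := hmem
  have hdLee : dLee S = leeWt s0 := by rw [dLee]; exact hws.symm
  -- some column of s0 is nonzero
  have : ∃ i, (fun j => s0 j i) ≠ (0 : Fin n → F) := by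
    by_contra hall
    push_neg at hall
    apply hs00
    funext j i
    exact congrFun (hall i) j
  obtain ⟨i, hi⟩ := this
  refine ⟨i, fun j => s0 j i, (h s0).mp hs0S i, hi, ?_⟩
  rw [hdLee, leeWt_eq]
  exact Finset.single_le_sum (f := fun i' => hammingNorm (fun j => s0 j i'))
    (fun _ _ => Nat.zero_le _) (Finset.mem_univ i)


theorem exists_ne_zero_of_one_lt_card {α : Type*} [Zero α] [Finite α] {T : Set α}
    (h : 1 < Nat.card T) : ∃ x ∈ T, x ≠ 0 := by
  haveI : Nontrivial T := Finite.one_lt_card_iff_nontrivial.mp h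
  obtain ⟨⟨x, hx⟩, ⟨y, hy⟩, hxy⟩ := exists_pair_ne T
  rcases eq_or_ne x 0 with rfl | hx0
  · exact ⟨y, hy, fun h0 => hxy (by simp [Subtype.ext_iff, h0])⟩
  · exact ⟨x, hx, hx0⟩

end S19

open S19 in
/-- `C` (with `|C| = q^K`, `|C_i| = q^{k_i}`, `0 < k_i < n`,
`|C^{⊥_l}| = q^{K'}`) is MDS over `R` iff its `l`-Galois dual `C^{⊥_l}` is MDS over `R`. -/
theorem statement19 {p e l n : ℕ} (hp : p.Prime) (he : 0 < e) (hl : l < e)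
    (F : Type*) [Field F] [Fintype F] [DecidableEq F] (hcard : Fintype.card F = p ^ e)
    (C : Submodule (RR F) (Fin n → RR F))
    (k : Fin 4 → ℕ)
    (hk : ∀ i, Nat.card (compCode (C : Set (Fin n → RR F)) i) = Fintype.card F ^ k i)
    (hk0 : ∀ i, 0 < k i) (hkn : ∀ i, k i < n)
    (K : ℕ) (hK : Nat.card C = Fintype.card F ^ K)
    (K' : ℕ)
    (hK' : Nat.card (galDualR (p ^ l) (C : Set (Fin n → RR F))) = Fintype.card F ^ K') :
    4 * dLee (C : Set (Fin n → RR F)) + K = 4 * n + 4 ↔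
      4 * dLee (galDualR (p ^ l) (C : Set (Fin n → RR F))) + K' = 4 * n + 4 := by
  classical
  have hq : 1 < Fintype.card F := Fintype.one_lt_card
  -- characteristic
  have hchar : CharP F p := by
    obtain ⟨m, hrp, hcm⟩ := FiniteField.card F (ringChar F)
    have hdvd : p ∣ ringChar F ^ (m : ℕ) := by
      rw [← hcm, hcard]
      exact dvd_pow_self p he.ne'
    have hpr : p = ringChar F :=
      (Nat.prime_dvd_prime_iff_eq hp hrp).mp (hp.dvd_of_dvd_pow hdvd)
    have := ringChar.charP F
    rwa [← hpr] at this
  haveI := hchar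
  haveI : Fact p.Prime := ⟨hp⟩
  have hpl0 : 0 < p ^ l := pow_pos hp.pos l
  have hbij : Function.Bijective fun a : F => a ^ p ^ l := by
    have h1 : (fun a : F => a ^ p ^ l) = ⇑(iterateFrobenius F p l) := by
      funext a; rw [iterateFrobenius_def]
    rw [h1]
    exact Finite.injective_iff_bijective.mp (iterateFrobenius F p l).injective
  -- components
  set D : Fin 4 → Submodule F (Fin n → F) := fun i => compSub C i with hD
  have hDset : ∀ i, (D i : Set (Fin n → F)) = compCode (C : Set (Fin n → RR F)) i :=
    fun i => rfl
  have hcardD : ∀ i, Nat.card (D i) = Fintype.card F ^ k i := fun i => hk i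
  have hfrD : ∀ i, Module.finrank F (D i) = k i := fun i =>
    Nat.pow_right_injective hq ((card_submodule (D i)).symm.trans (hcardD i))
  set E : Fin 4 → Submodule F (Fin n → F) := fun i => dualSub (D i) with hE
  have hGal : ∀ i, galDualF (p ^ l) (compCode (C : Set (Fin n → RR F)) i)
      = ⇑(Phi hbij) ⁻¹' (E i : Set (Fin n → F)) := fun i =>
    galDualF_eq_preimage hbij _ _ (fun x => mem_dualSub)
  have hcardE : ∀ i, Nat.card (E i) = Fintype.card F ^ (n - k i) := by
    intro i
    rw [card_submodule (E i)]
    congr 1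
    rw [hE]
    rw [finrank_dualSub, hfrD]
  have hcardG : ∀ i, Nat.card (galDualF (p ^ l) (compCode (C : Set (Fin n → RR F)) i))
      = Fintype.card F ^ (n - k i) := by
    intro i
    rw [hGal i, card_preimage hbij, ← hcardE i]
    rfl
  have hdG : ∀ i, dHam (galDualF (p ^ l) (compCode (C : Set (Fin n → RR F)) i))
      = dHam (E i : Set (Fin n → F)) := fun i => by
    rw [hGal i, dHam_preimage hbij hpl0]
  -- K and K'
  have hKe : K = ∑ i, k i := by
    refine Nat.pow_right_injective hq ?_
    show Fintype.card F ^ K = Fintype.card F ^ (∑ i, k i)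
    have h1 : Nat.card ((C : Set (Fin n → RR F)) : Set (Fin n → RR F))
        = ∏ i, Nat.card (compCode (C : Set (Fin n → RR F)) i) :=
      card_prod (fun s => mem_prod_iff C s)
    have h2 : (∏ i, Nat.card (compCode (C : Set (Fin n → RR F)) i))
        = ∏ i, Fintype.card F ^ k i := Finset.prod_congr rfl fun i _ => hk i
    rw [← hK]
    calc Nat.card C = ∏ i, Fintype.card F ^ k i := by rw [← h2, ← h1]; rfl
      _ = Fintype.card F ^ (∑ i, k i) := Finset.prod_pow_eq_pow_sum _ _ _
  have hK'e : K' = ∑ i, (n - k i) := by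
    refine Nat.pow_right_injective hq ?_
    show Fintype.card F ^ K' = Fintype.card F ^ (∑ i, (n - k i))
    have h1 : Nat.card (galDualR (p ^ l) (C : Set (Fin n → RR F)))
        = ∏ i, Nat.card (galDualF (p ^ l) (compCode (C : Set (Fin n → RR F)) i)) :=
      card_prod (fun s => galDualR_mem_iff C (p ^ l) s)
    have h2 : (∏ i, Nat.card (galDualF (p ^ l) (compCode (C : Set (Fin n → RR F)) i)))
        = ∏ i, Fintype.card F ^ (n - k i) := Finset.prod_congr rfl fun i _ => hcardG i
    rw [← hK', h1, h2]
    exact Finset.prod_pow_eq_pow_sum _ _ _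
  -- nonzero elements
  have hnzD : ∀ i, ∃ x ∈ compCode (C : Set (Fin n → RR F)) i, x ≠ 0 := by
    intro i
    apply exists_ne_zero_of_one_lt_card
    rw [hk i]
    exact Nat.one_lt_pow (hk0 i).ne' hq
  have hnzG : ∀ i, ∃ x ∈ galDualF (p ^ l) (compCode (C : Set (Fin n → RR F)) i), x ≠ 0 := by
    intro i
    apply exists_ne_zero_of_one_lt_card
    rw [hcardG i]
    exact Nat.one_lt_pow (by have := hkn i; omega) hq
  -- zero membership
  have h0D : ∀ i, (0 : Fin n → F) ∈ compCode (C : Set (Fin n → RR F)) i :=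
    fun i => (D i).zero_mem
  have h0G : ∀ i, (0 : Fin n → F) ∈ galDualF (p ^ l) (compCode (C : Set (Fin n → RR F)) i) := by
    intro i c hc
    simp [zero_pow hpl0.ne']
  -- dLee bounds, primal
  have hle : ∀ i, dLee (C : Set (Fin n → RR F)) ≤ dHam (compCode (C : Set (Fin n → RR F)) i) := by
    intro i
    obtain ⟨x, hx, hx0, hxe⟩ := dHam_mem (hnzD i)
    rw [← hxe]
    exact dLee_le (fun s => mem_prod_iff C s) h0D hx hx0
  have hex : ∃ i, dHam (compCode (C : Set (Fin n → RR F)) i)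
      ≤ dLee (C : Set (Fin n → RR F)) := by
    obtain ⟨i, x, hx, hx0, hxle⟩ := exists_dLee_col (fun s => mem_prod_iff C s) h0D (hnzD 0)
    exact ⟨i, le_trans (dHam_le hx hx0) hxle⟩
  -- dLee bounds, dual
  have hle' : ∀ i, dLee (galDualR (p ^ l) (C : Set (Fin n → RR F)))
      ≤ dHam (E i : Set (Fin n → F)) := by
    intro i
    obtain ⟨x, hx, hx0, hxe⟩ := dHam_mem (hnzG i)
    have hde : dHam (E i : Set (Fin n → F)) = hammingNorm x := (hdG i).symm.trans hxe.symm
    rw [hde]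
    exact dLee_le (fun s => galDualR_mem_iff C (p ^ l) s) h0G hx hx0
  have hex' : ∃ i, dHam (E i : Set (Fin n → F))
      ≤ dLee (galDualR (p ^ l) (C : Set (Fin n → RR F))) := by
    obtain ⟨i, x, hx, hx0, hxle⟩ := exists_dLee_col (fun s => galDualR_mem_iff C (p ^ l) s)
      h0G (hnzG 0)
    exact ⟨i, le_trans (le_of_eq (hdG i).symm) (le_trans (dHam_le hx hx0) hxle)⟩
  -- Singleton bounds
  have hsing : ∀ i, dHam (compCode (C : Set (Fin n → RR F)) i) + k i ≤ n + 1 := by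
    intro i
    obtain ⟨x, hx, hx0, hxw⟩ := exists_low_weight (D i) (hk0 i) (le_of_lt (hkn i))
      (le_of_eq (hcardD i).symm)
    exact le_trans (Nat.add_le_add_right (dHam_le hx hx0) _) hxw
  have hsing' : ∀ i, dHam (E i : Set (Fin n → F)) + (n - k i) ≤ n + 1 := by
    intro i
    obtain ⟨x, hx, hx0, hxw⟩ := exists_low_weight (E i) (by have := hkn i; omega)
      (by omega) (le_of_eq (hcardE i).symm)
    exact le_trans (Nat.add_le_add_right (dHam_le hx hx0) _) hxw
  -- per-component MDS duality
  have hiff : ∀ i, (dHam (compCode (C : Set (Fin n → RR F)) i) + k i = n + 1 ↔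
      dHam (E i : Set (Fin n → F)) + (n - k i) = n + 1) := by
    intro i
    exact mds_dual_iff dualSub (fun D x => mem_dualSub) finrank_dualSub card_submodule
      dualSub_dualSub (D i) (hcardD i) (hk0 i) (hkn i)
  -- final arithmetic
  obtain ⟨i0, hi0⟩ := hex
  obtain ⟨i1, hi1⟩ := hex'
  have hex4 : dHam (compCode (C : Set (Fin n → RR F)) 0) ≤ dLee (C : Set (Fin n → RR F)) ∨
      dHam (compCode (C : Set (Fin n → RR F)) 1) ≤ dLee (C : Set (Fin n → RR F)) ∨
      dHam (compCode (C : Set (Fin n → RR F)) 2) ≤ dLee (C : Set (Fin n → RR F)) ∨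
      dHam (compCode (C : Set (Fin n → RR F)) 3) ≤ dLee (C : Set (Fin n → RR F)) := by
    fin_cases i0
    · exact Or.inl hi0
    · exact Or.inr (Or.inl hi0)
    · exact Or.inr (Or.inr (Or.inl hi0))
    · exact Or.inr (Or.inr (Or.inr hi0))
  have hex4' : dHam (E 0 : Set (Fin n → F)) ≤ dLee (galDualR (p ^ l) (C : Set (Fin n → RR F))) ∨
      dHam (E 1 : Set (Fin n → F)) ≤ dLee (galDualR (p ^ l) (C : Set (Fin n → RR F))) ∨
      dHam (E 2 : Set (Fin n → F)) ≤ dLee (galDualR (p ^ l) (C : Set (Fin n → RR F))) ∨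
      dHam (E 3 : Set (Fin n → F)) ≤ dLee (galDualR (p ^ l) (C : Set (Fin n → RR F))) := by
    fin_cases i1
    · exact Or.inl hi1
    · exact Or.inr (Or.inl hi1)
    · exact Or.inr (Or.inr (Or.inl hi1))
    · exact Or.inr (Or.inr (Or.inr hi1))
  rw [hKe, hK'e, Fin.sum_univ_four, Fin.sum_univ_four]
  have p0 := hle 0; have p1 := hle 1; have p2 := hle 2; have p3 := hle 3
  have q0 := hle' 0; have q1 := hle' 1; have q2 := hle' 2; have q3 := hle' 3
  have s0 := hsing 0; have s1 := hsing 1; have s2 := hsing 2; have s3 := hsing 3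
  have t0 := hsing' 0; have t1 := hsing' 1; have t2 := hsing' 2; have t3 := hsing' 3
  have f0 := hiff 0; have f1 := hiff 1; have f2 := hiff 2; have f3 := hiff 3
  have u0 := hk0 0; have u1 := hk0 1; have u2 := hk0 2; have u3 := hk0 3
  have v0 := hkn 0; have v1 := hkn 1; have v2 := hkn 2; have v3 := hkn 3
  omega
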